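/- For all real numbers r₁, r₂, r₃ > 0 with r₁² + r₂² + r₃² = 1, one has π²(1−r₁²)(1−r₂²)(1−r₃²)/(2r₁r₂r₃) ≥ 4π²/(3√3), with equality if and only if r₁ = r₂ = r₃ = 1/√3. In other words, among Lagrangian homogeneous tori in ℂP², the Clifford torus attains the minimum of the energy functional, and E(Σ_Cl) = 4π²/(3√3). -/

import Mathlib

open Real

set_option maxHeartbeats 800000

private lemma clifford_aux (x y z : ℝ) (hx : 0 < x) (hy : 0 < y) (hz : 0 < z)
    (hsum : x + y + z = 1) :
    27 * ((1-x)*(1-y)*(1-z))^2 ≥ 64 * (x*y*z) ∧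
    (27 * ((1-x)*(1-y)*(1-z))^2 = 64 * (x*y*z) ↔ x = 1/3 ∧ y = 1/3 ∧ z = 1/3) := by
  have hP : (1-x)*(1-y)*(1-z) = (x*y + y*z + z*x) - x*y*z := by nlinarith [hsum]
  have hq0 : 0 < x*y + y*z + z*x := by positivity
  have hp0 : 0 < x*y*z := by positivity
  have hq9p : x*y + y*z + z*x ≥ 9*(x*y*z) := by
    nlinarith [mul_nonneg hx.le (sq_nonneg (y-z)), mul_nonneg hy.le (sq_nonneg (z-x)),
      mul_nonneg hz.le (sq_nonneg (x-y)), hsum]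
  have hq2 : (x*y + y*z + z*x)^2 ≥ 3*(x*y*z) := by
    nlinarith [sq_nonneg (x*y - y*z), sq_nonneg (y*z - z*x), sq_nonneg (z*x - x*y), hsum]
  have hPq : (1-x)*(1-y)*(1-z) ≥ 8/9 * (x*y + y*z + z*x) := by rw [hP]; linarith
  have hP0 : 0 < (1-x)*(1-y)*(1-z) := by nlinarith
  have hineq : 27 * ((1-x)*(1-y)*(1-z))^2 ≥ 64 * (x*y*z) := by
    nlinarith [mul_le_mul hPq hPq (by positivity) hP0.le, hq2]
  refine ⟨hineq, ?_, ?_⟩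
  · intro h27
    have e1 : (x*y + y*z + z*x)^2 = 3*(x*y*z) := by
      have h1' : (x*y + y*z + z*x)^2 ≤ 3*(x*y*z) := by
        nlinarith [mul_le_mul hPq hPq (by positivity) hP0.le]
      linarith
    have ePq : (1-x)*(1-y)*(1-z) = 8/9 * (x*y + y*z + z*x) := by
      have h0 : ((1-x)*(1-y)*(1-z) - 8/9*(x*y + y*z + z*x)) *
          ((1-x)*(1-y)*(1-z) + 8/9*(x*y + y*z + z*x)) = 0 := by
        linear_combination (1/27)*h27 - (64/81)*e1
      rcases mul_eq_zero.mp h0 with h | h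
      · linarith
      · linarith
    have epq : x*y*z = (x*y + y*z + z*x)/9 := by rw [hP] at ePq; linarith
    have e2 : x*y + y*z + z*x = 1/3 := by
      have h0 : (x*y + y*z + z*x) * (3*(x*y + y*z + z*x) - 1) = 0 := by
        linear_combination 3*e1 + 9*epq
      rcases mul_eq_zero.mp h0 with h | h
      · exact absurd h hq0.ne'
      · linarith
    have hsq0 : (x-y)^2 + (y-z)^2 + (z-x)^2 = 0 := by
      linear_combination 2*(x+y+z+1)*hsum - 6*e2
    have hxy : x = y := by
      have h0 : (x-y)^2 = 0 :=
        le_antisymm (by nlinarith [sq_nonneg (y-z), sq_nonneg (z-x)]) (sq_nonneg _)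
      have := pow_eq_zero_iff (n := 2) (by norm_num) |>.mp h0
      linarith [sub_eq_zero.mp this]
    have hyz : y = z := by
      have h0 : (y-z)^2 = 0 :=
        le_antisymm (by nlinarith [sq_nonneg (x-y), sq_nonneg (z-x)]) (sq_nonneg _)
      have := pow_eq_zero_iff (n := 2) (by norm_num) |>.mp h0
      linarith [sub_eq_zero.mp this]
    refine ⟨by linarith, by linarith, by linarith⟩
  · rintro ⟨e1, e2, e3⟩
    subst e1 e2 e3
    norm_num

/-- Among homogeneous Lagrangian tori in ℂP², the Clifford torus
(`r₁ = r₂ = r₃ = 1/√3`) attains the minimum `4π²/(3√3)` of the energy functional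
`E(Σ_{r₁,r₂,r₃}) = π²(1−r₁²)(1−r₂²)(1−r₃²)/(2r₁r₂r₃)`. -/
theorem clifford_torus_minimizes_energy_among_homogeneous_tori
    (r1 r2 r3 : ℝ) (h1 : 0 < r1) (h2 : 0 < r2) (h3 : 0 < r3)
    (hsum : r1^2 + r2^2 + r3^2 = 1) :
    π^2 * (1 - r1^2) * (1 - r2^2) * (1 - r3^2) / (2 * r1 * r2 * r3) ≥
      4 * π^2 / (3 * Real.sqrt 3) ∧
    (π^2 * (1 - r1^2) * (1 - r2^2) * (1 - r3^2) / (2 * r1 * r2 * r3) =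
        4 * π^2 / (3 * Real.sqrt 3) ↔
      r1 = 1 / Real.sqrt 3 ∧ r2 = 1 / Real.sqrt 3 ∧ r3 = 1 / Real.sqrt 3) := by
  have h3pos : (0:ℝ) < Real.sqrt 3 := Real.sqrt_pos.mpr (by norm_num)
  have hs3 : Real.sqrt 3 ^ 2 = 3 := Real.sq_sqrt (by norm_num)
  have hπ := Real.pi_pos
  have hx : (0:ℝ) < r1^2 := by positivity
  have hy : (0:ℝ) < r2^2 := by positivity
  have hz : (0:ℝ) < r3^2 := by positivity
  obtain ⟨hineq, hiff⟩ := clifford_aux (r1^2) (r2^2) (r3^2) hx hy hz hsum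
  have habc : 0 < r1 * r2 * r3 := by positivity
  set P : ℝ := (1 - r1^2) * (1 - r2^2) * (1 - r3^2) with hPdef
  have f1 : (0:ℝ) < 1 - r1^2 := by nlinarith
  have f2 : (0:ℝ) < 1 - r2^2 := by nlinarith
  have f3 : (0:ℝ) < 1 - r3^2 := by nlinarith
  have hP0 : 0 < P := by rw [hPdef]; exact mul_pos (mul_pos f1 f2) f3
  have hkey : 8 * (r1*r2*r3) ≤ 3 * Real.sqrt 3 * P := by
    have hsq : (8*(r1*r2*r3))^2 ≤ (3*Real.sqrt 3*P)^2 := by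
      have h9 : (3*Real.sqrt 3*P)^2 = 27 * P^2 := by
        linear_combination 9*P^2*hs3
      rw [h9]
      nlinarith [hineq]
    nlinarith [hsq, mul_pos h3pos hP0, habc]
  constructor
  · rw [ge_iff_le, div_le_div_iff₀ (by positivity) (by positivity)]
    calc 4*π^2*(2*r1*r2*r3) = π^2 * (8*(r1*r2*r3)) := by ring
      _ ≤ π^2 * (3*Real.sqrt 3 * P) := mul_le_mul_of_nonneg_left hkey (sq_nonneg π)
      _ = π^2*(1-r1^2)*(1-r2^2)*(1-r3^2)*(3*Real.sqrt 3) := by rw [hPdef]; ring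
  have h13 : (1/Real.sqrt 3 : ℝ)^2 = 1/3 := by rw [div_pow, one_pow, hs3]
  constructor
  · intro heq
    rw [div_eq_div_iff (by positivity) (by positivity)] at heq
    have hc : π^2 * (P * (3*Real.sqrt 3)) = π^2 * (8*(r1*r2*r3)) := by
      rw [hPdef]; linear_combination heq
    have heq' : P * (3*Real.sqrt 3) = 8*(r1*r2*r3) :=
      mul_left_cancel₀ (by positivity : (π^2:ℝ) ≠ 0) hc
    have hsq' : (P * (3*Real.sqrt 3))^2 = (8*(r1*r2*r3))^2 := by rw [heq']
    have h27 : 27 * P^2 = 64 * (r1^2*r2^2*r3^2) := by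
      linear_combination hsq' - 9*P^2*hs3
    have h27' : 27 * ((1-r1^2)*(1-r2^2)*(1-r3^2))^2 = 64 * (r1^2*r2^2*r3^2) := by
      rw [← hPdef]; exact h27
    obtain ⟨e1, e2, e3⟩ := hiff.mp h27'
    have hr : ∀ r : ℝ, 0 < r → r^2 = 1/3 → r = 1/Real.sqrt 3 := by
      intro r hr0 hr2
      have h0 : (r - 1/Real.sqrt 3) * (r + 1/Real.sqrt 3) = 0 := by
        linear_combination hr2 - h13
      rcases mul_eq_zero.mp h0 with h | h
      · linarith
      · have hpos : (0:ℝ) < 1/Real.sqrt 3 := by positivity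
        linarith
    exact ⟨hr r1 h1 e1, hr r2 h2 e2, hr r3 h3 e3⟩
  · rintro ⟨e1, e2, e3⟩
    rw [e1, e2, e3, h13]
    rw [div_eq_div_iff (by positivity) (by positivity)]
    have hne : Real.sqrt 3 ≠ 0 := h3pos.ne'
    field_simp
    linear_combination (8*(Real.sqrt 3^2+3))*hs3
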